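/- Let k, m be natural numbers with 0 < k and 1 < m, and let H be a k-sparse hypergraph (possibly with multiple edges) of rank at most m. Then H has an orientation f that is bounded by m·k² and such that the edge relation of the directed graph O_f(H) is antisymmetric; that is, there are no two distinct vertices a, b such that both (a,b) and (b,a) are edges of O_f(H). -/

import Mathlib

open Filter


private lemma exists_rel_max {α : Type*} (S : α → α → Prop)
    (htrans : ∀ {a b c}, S a b → S b c → S a c)
    (htot : ∀ a b, a ≠ b → S a b ∨ S b a) (s : Finset α) :
    s.Nonempty → ∃ b ∈ s, ∀ a ∈ s, a ≠ b → S a b := by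
  classical
  induction s using Finset.induction_on with
  | empty => intro h; simp at h
  | insert a t ha ih =>
    intro _
    rcases t.eq_empty_or_nonempty with rfl | ht
    · exact ⟨a, by simp, by simp⟩
    · obtain ⟨b, hb, hmax⟩ := ih ht
      have hab : a ≠ b := fun h => ha (h ▸ hb)
      by_cases hS : S a b
      · refine ⟨b, Finset.mem_insert_of_mem hb, ?_⟩
        intro x hx hxb
        rcases Finset.mem_insert.mp hx with rfl | hx
        · exact hS
        · exact hmax x hx hxb
      · have hba : S b a := (htot a b hab).resolve_left hS
        refine ⟨a, Finset.mem_insert_self a t, ?_⟩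
        intro x hx hxa
        rcases Finset.mem_insert.mp hx with rfl | hx
        · exact absurd rfl hxa
        · by_cases hxb : x = b
          · exact hxb ▸ hba
          · exact htrans (hmax x hx hxb) hba

private lemma exists_small_degree {V E : Type*} (k m : ℕ) (I : E → Finset V)
    (hrank : ∀ e : E, (I e).card ≤ m)
    (hsparse : ∀ X : Finset V,
      {e : E | I e ⊆ X}.Finite ∧ {e : E | I e ⊆ X}.ncard ≤ k * X.card)
    (X : Finset V) (hX : X.Nonempty) :
    ∃ v ∈ X, {e : E | I e ⊆ X ∧ v ∈ I e}.ncard ≤ m * k := by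
  classical
  obtain ⟨hfin, hcard⟩ := hsparse X
  set F := hfin.toFinset with hF
  have hFcard : F.card ≤ k * X.card := by
    rwa [Set.ncard_eq_toFinset_card _ hfin] at hcard
  by_contra h
  push_neg at h
  have key : ∀ v ∈ X, m * k + 1 ≤ (F.filter (fun e => v ∈ I e)).card := by
    intro v hv
    have hset : {e : E | I e ⊆ X ∧ v ∈ I e} = ↑(F.filter (fun e => v ∈ I e)) := by
      ext e
      simp [hF, Set.Finite.mem_toFinset]
    have h2 := h v hv
    rw [hset, Set.ncard_coe_finset] at h2
    omega
  have sum1 : X.card * (m * k + 1) ≤ ∑ v ∈ X, (F.filter (fun e => v ∈ I e)).card := by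
    simpa [smul_eq_mul] using Finset.card_nsmul_le_sum X _ (m * k + 1) key
  have sum2 : ∑ v ∈ X, (F.filter (fun e => v ∈ I e)).card
      = ∑ e ∈ F, (X.filter (fun v => v ∈ I e)).card := by
    simp only [Finset.card_filter]
    exact Finset.sum_comm
  have sum3 : ∑ e ∈ F, (X.filter (fun v => v ∈ I e)).card ≤ F.card * m := by
    apply Finset.sum_le_card_nsmul
    intro e _
    calc (X.filter (fun v => v ∈ I e)).card ≤ (I e).card :=
          Finset.card_le_card (by intro v hv; exact (Finset.mem_filter.mp hv).2)
      _ ≤ m := hrank e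
  have hXc : 0 < X.card := Finset.card_pos.mpr hX
  have : X.card * (m * k + 1) ≤ k * X.card * m := by
    calc X.card * (m * k + 1) ≤ ∑ v ∈ X, (F.filter (fun e => v ∈ I e)).card := sum1
      _ = _ := sum2
      _ ≤ F.card * m := sum3
      _ ≤ k * X.card * m := Nat.mul_le_mul_right m hFcard
  nlinarith

private lemma exists_good_order {V E : Type*} (k m : ℕ) (I : E → Finset V)
    (hrank : ∀ e : E, (I e).card ≤ m)
    (hsparse : ∀ X : Finset V,
      {e : E | I e ⊆ X}.Finite ∧ {e : E | I e ⊆ X}.ncard ≤ k * X.card)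
    (X : Finset V) :
    ∃ ord : V → ℕ, Set.InjOn ord ↑X ∧ ∀ v ∈ X,
      {e : E | I e ⊆ X ∧ v ∈ I e ∧ ∀ w ∈ I e, ord w ≤ ord v}.ncard ≤ m * k := by
  classical
  induction X using Finset.strongInduction with
  | _ X ih =>
    rcases X.eq_empty_or_nonempty with rfl | hX
    · exact ⟨fun _ => 0, by simp, by simp⟩
    · obtain ⟨v, hv, hdeg⟩ := exists_small_degree k m I hrank hsparse X hX
      set X' := X.erase v with hX'
      obtain ⟨ord', hinj', hbound'⟩ := ih X' (Finset.erase_ssubset hv)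
      set N := X'.sup ord' with hN
      refine ⟨fun w => if w = v then N + 1 else ord' w, ?_, ?_⟩
      · intro a ha b hb hab
        simp only at hab
        by_cases hav : a = v <;> by_cases hbv : b = v
        · rw [hav, hbv]
        · exfalso
          rw [if_pos hav, if_neg hbv] at hab
          have hbX' : b ∈ X' := Finset.mem_erase.mpr ⟨hbv, hb⟩
          have := Finset.le_sup (f := ord') hbX'
          omega
        · exfalso
          rw [if_neg hav, if_pos hbv] at hab
          have haX' : a ∈ X' := Finset.mem_erase.mpr ⟨hav, ha⟩
          have := Finset.le_sup (f := ord') haX'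
          omega
        · rw [if_neg hav, if_neg hbv] at hab
          exact hinj' (Finset.mem_erase.mpr ⟨hav, ha⟩) (Finset.mem_erase.mpr ⟨hbv, hb⟩) hab
      · intro u hu
        by_cases huv : u = v
        · subst huv
          refine le_trans (Set.ncard_le_ncard ?_ ?_) hdeg
          · intro e he
            exact ⟨he.1, he.2.1⟩
          · exact (hsparse X).1.subset (fun e he => he.1)
        · have hsub : {e : E | I e ⊆ X ∧ u ∈ I e ∧ ∀ w ∈ I e,
              (if w = v then N + 1 else ord' w) ≤ (if u = v then N + 1 else ord' u)}
              ⊆ {e : E | I e ⊆ X' ∧ u ∈ I e ∧ ∀ w ∈ I e, ord' w ≤ ord' u} := by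
            intro e ⟨heX, heu, hew⟩
            have huX' : u ∈ X' := Finset.mem_erase.mpr ⟨huv, hu⟩
            have hNu : ord' u ≤ N := Finset.le_sup (f := ord') huX'
            have hveI : v ∉ I e := by
              intro hvE
              have := hew v hvE
              rw [if_pos rfl, if_neg huv] at this
              omega
            refine ⟨fun w hw => Finset.mem_erase.mpr ⟨fun h => hveI (h ▸ hw), heX hw⟩, heu, ?_⟩
            intro w hw
            have hwv : w ≠ v := fun h => hveI (h ▸ hw)
            have := hew w hw
            rw [if_neg hwv, if_neg huv] at this
            exact this
          refine le_trans (Set.ncard_le_ncard hsub ?_) (hbound' u (Finset.mem_erase.mpr ⟨huv, hu⟩))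
          exact (hsparse X').1.subset (fun e he => he.1)

/-- Every `k`-sparse hypergraph (possibly with multiple edges) of rank at most `m`
(where `0 < k` and `1 < m`) has an orientation `f` bounded by `m·k²` such that the
edge relation of the directed graph `O_f(H)` is antisymmetric. -/
theorem k_sparse_has_antisymmetric_orientation {V E : Type*} (k m : ℕ)
    (hk : 0 < k) (hm : 1 < m) (I : E → Finset V)
    (hrank : ∀ e : E, (I e).card ≤ m)
    (hsparse : ∀ X : Finset V,
      {e : E | I e ⊆ X}.Finite ∧ {e : E | I e ⊆ X}.ncard ≤ k * X.card) :
    ∃ f : E → V, (∀ e : E, f e ∈ I e) ∧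
      (∀ a : V, {e : E | f e = a}.Finite ∧ {e : E | f e = a}.ncard ≤ m * k ^ 2) ∧
      ∀ a b : V, a ≠ b →
        (∃ e : E, a ∈ I e ∧ f e = b) → ¬ ∃ e : E, b ∈ I e ∧ f e = a := by
  classical
  -- every edge is nonempty
  have hne : ∀ e : E, (I e).Nonempty := by
    intro e
    rcases (I e).eq_empty_or_nonempty with h | h
    · exfalso
      obtain ⟨hfin, hcard⟩ := hsparse ∅
      have hmem : e ∈ {e : E | I e ⊆ (∅ : Finset V)} := by simp [h]
      have : {e : E | I e ⊆ (∅ : Finset V)} = ∅ :=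
        (Set.ncard_eq_zero hfin).mp (by simpa using hcard)
      rw [this] at hmem
      exact hmem
    · exact h
  -- an order for every finite vertex set
  choose ord hinj hbound using exists_good_order k m I hrank hsparse
  -- strict order per finite set: Y-block below, ordered by ord Y; complement ordered by a well-order
  set s : Finset V → V → V → Prop := fun Y a b =>
    (a ∈ Y ∧ b ∈ Y ∧ ord Y a < ord Y b) ∨ (a ∈ Y ∧ b ∉ Y) ∨
      (a ∉ Y ∧ b ∉ Y ∧ WellOrderingRel a b) with hs
  have strans : ∀ Y a b c, s Y a b → s Y b c → s Y a c := by
    intro Y a b c hab hbc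
    rcases hab with ⟨ha, hb, h1⟩ | ⟨ha, hb⟩ | ⟨ha, hb, h1⟩ <;>
      rcases hbc with ⟨hb', hc, h2⟩ | ⟨hb', hc⟩ | ⟨hb', hc, h2⟩
    · exact Or.inl ⟨ha, hc, h1.trans h2⟩
    · exact Or.inr (Or.inl ⟨ha, hc⟩)
    · exact absurd hb hb'
    · exact absurd hb' hb
    · exact absurd hb' hb
    · exact Or.inr (Or.inl ⟨ha, hc⟩)
    · exact absurd hb' hb
    · exact absurd hb' hb
    · exact Or.inr (Or.inr ⟨ha, hc, _root_.trans h1 h2⟩)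
  have sasymm : ∀ Y a b, s Y a b → ¬ s Y b a := by
    intro Y a b hab hba
    rcases hab with ⟨ha, hb, h1⟩ | ⟨ha, hb⟩ | ⟨ha, hb, h1⟩ <;>
      rcases hba with ⟨hb', ha', h2⟩ | ⟨hb', ha'⟩ | ⟨hb', ha', h2⟩
    · omega
    · exact ha' ha
    · exact hb' hb
    · exact hb hb'
    · exact hb hb'
    · exact ha' ha
    · exact ha ha'
    · exact hb hb'
    · exact asymm h1 h2
  have stot : ∀ Y a b, a ≠ b → s Y a b ∨ s Y b a := by
    intro Y a b hab
    by_cases ha : a ∈ Y <;> by_cases hb : b ∈ Y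
    · have : ord Y a ≠ ord Y b := fun h => hab (hinj Y ha hb h)
      rcases Nat.lt_or_ge (ord Y a) (ord Y b) with h | h
      · exact Or.inl (Or.inl ⟨ha, hb, h⟩)
      · exact Or.inr (Or.inl ⟨hb, ha, lt_of_le_of_ne h (Ne.symm this)⟩)
    · exact Or.inl (Or.inr (Or.inl ⟨ha, hb⟩))
    · exact Or.inr (Or.inr (Or.inl ⟨hb, ha⟩))
    · rcases trichotomous_of WellOrderingRel a b with h | h | h
      · exact Or.inl (Or.inr (Or.inr ⟨ha, hb, h⟩))
      · exact absurd h hab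
      · exact Or.inr (Or.inr (Or.inr ⟨hb, ha, h⟩))
  -- the ultrafilter limit
  have hNB : (atTop : Filter (Finset V)).NeBot := atTop_neBot
  set U : Ultrafilter (Finset V) := Ultrafilter.of atTop with hU
  have hUof : ∀ {A : Set (Finset V)}, A ∈ (atTop : Filter (Finset V)) → A ∈ U :=
    fun h => Ultrafilter.of_le atTop h
  set S : V → V → Prop := fun a b => {Y | s Y a b} ∈ U with hS
  have Strans : ∀ {a b c}, S a b → S b c → S a c := by
    intro a b c h1 h2
    exact Filter.mem_of_superset (Filter.inter_mem h1 h2)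
      (fun Y hY => strans Y a b c hY.1 hY.2)
  have Sasymm : ∀ a b, S a b → ¬ S b a := by
    intro a b h1 h2
    have : {Y | s Y a b} ∩ {Y | s Y b a} ∈ U := Filter.inter_mem h1 h2
    have hemp : {Y | s Y a b} ∩ {Y | s Y b a} = ∅ := by
      ext Y; simp only [Set.mem_inter_iff, Set.mem_setOf_eq, Set.mem_empty_iff_false, iff_false]
      rintro ⟨u1, u2⟩; exact sasymm Y a b u1 u2
    rw [hemp] at this
    exact Filter.empty_notMem (U : Filter (Finset V)) this
  have Stot : ∀ a b, a ≠ b → S a b ∨ S b a := by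
    intro a b hab
    have : {Y | s Y a b} ∪ {Y | s Y b a} = Set.univ := by
      ext Y; simp only [Set.mem_union, Set.mem_setOf_eq, Set.mem_univ, iff_true]
      exact stot Y a b hab
    have : {Y | s Y a b} ∪ {Y | s Y b a} ∈ U := by rw [this]; exact Filter.univ_mem
    exact Ultrafilter.union_mem_iff.mp this
  -- define f : orient every edge to its S-maximum
  have hmaxex : ∀ e : E, ∃ b ∈ I e, ∀ a ∈ I e, a ≠ b → S a b := fun e =>
    exists_rel_max S Strans Stot (I e) (hne e)
  choose f hf1 hf2 using hmaxex
  refine ⟨f, hf1, ?_, ?_⟩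
  · -- boundedness
    intro v
    have key : ∀ T : Finset E, ↑T ⊆ {e : E | f e = v} → T.card ≤ m * k := by
      intro T hT
      by_contra hT'
      push_neg at hT'
      have hvT : ∀ e ∈ T, f e = v := fun e he => hT he
      have hTne : T.Nonempty := Finset.card_pos.mp (by omega)
      set X0 : Finset V := T.biUnion I with hX0
      have hA : {Y : Finset V | X0 ⊆ Y} ∈ U := by
        apply hUof
        simpa [Set.Ici, Finset.le_iff_subset] using Ici_mem_atTop X0
      have hB : ∀ e ∈ T, ∀ w ∈ I e, w ≠ v → {Y | s Y w v} ∈ U := by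
        intro e he w hw hwv
        have := hf2 e w hw (by rw [hvT e he]; exact hwv)
        rwa [hvT e he] at this
      have hIm : ({Y : Finset V | X0 ⊆ Y} ∩
          ⋂ e ∈ T, ⋂ w ∈ (I e).filter (· ≠ v), {Y : Finset V | s Y w v}) ∈ U := by
        apply Filter.inter_mem hA
        rw [Filter.biInter_finset_mem]
        intro e he
        rw [Filter.biInter_finset_mem]
        intro w hw
        obtain ⟨hw1, hw2⟩ := Finset.mem_filter.mp hw
        exact hB e he w hw1 hw2
      obtain ⟨Y, hY1, hY2⟩ := Filter.nonempty_of_mem hIm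
      have hX0Y : X0 ⊆ Y := hY1
      -- v ∈ Y
      obtain ⟨e0, he0⟩ := hTne
      have hvY : v ∈ Y := hX0Y (Finset.mem_biUnion.mpr ⟨e0, he0, (hvT e0 he0) ▸ hf1 e0⟩)
      have hsub : ↑T ⊆ {e : E | I e ⊆ Y ∧ v ∈ I e ∧ ∀ w ∈ I e, ord Y w ≤ ord Y v} := by
        intro e he
        have heT : e ∈ T := he
        have hIeY : I e ⊆ Y := fun w hw =>
          hX0Y (Finset.mem_biUnion.mpr ⟨e, heT, hw⟩)
        refine ⟨hIeY, (hvT e heT) ▸ hf1 e, ?_⟩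
        intro w hw
        by_cases hwv : w = v
        · exact le_of_eq (by rw [hwv])
        · have hsY : s Y w v := by
            have := Set.mem_iInter₂.mp (Set.mem_iInter₂.mp hY2 e heT) w
              (Finset.mem_filter.mpr ⟨hw, hwv⟩)
            exact this
          rcases hsY with ⟨_, _, hlt⟩ | ⟨_, hv'⟩ | ⟨hw', _⟩
          · exact hlt.le
          · exact absurd hvY hv'
          · exact absurd (hIeY hw) hw'
      have hfin : {e : E | I e ⊆ Y ∧ v ∈ I e ∧ ∀ w ∈ I e, ord Y w ≤ ord Y v}.Finite :=
        (hsparse Y).1.subset (fun e he => he.1)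
      have : T.card ≤ m * k := by
        have h1 : (↑T : Set E).ncard ≤ _ := Set.ncard_le_ncard hsub hfin
        rw [Set.ncard_coe_finset] at h1
        exact h1.trans (hbound Y v hvY)
      omega
    have hfin : {e : E | f e = v}.Finite := by
      by_contra hinf
      obtain ⟨T, hT1, hT2⟩ := Set.Infinite.exists_subset_card_eq hinf (m * k + 1)
      have := key T hT1
      omega
    refine ⟨hfin, ?_⟩
    have h1 : {e : E | f e = v}.ncard ≤ m * k := by
      rw [Set.ncard_eq_toFinset_card _ hfin]
      exact key hfin.toFinset (by simp)
    have h2 : m * k ≤ m * k ^ 2 := by nlinarith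
    omega
  · -- antisymmetry
    rintro a b hab ⟨e1, ha1, hb1⟩ ⟨e2, hb2, ha2⟩
    have h1 : S a b := by
      have := hf2 e1 a ha1 (by rw [hb1]; exact hab)
      rwa [hb1] at this
    have h2 : S b a := by
      have := hf2 e2 b hb2 (by rw [ha2]; exact (Ne.symm hab))
      rwa [ha2] at this
    exact Sasymm a b h1 h2
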